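/- arXiv:1604.06975 — 4 statements merged into one kernel-verified Lean document; each statement's English description precedes it below -/
import Mathlib

section
/- Every sequence (γ_n) of loops that is Cauchy for d_Γ converges in d_Γ to some loop γ; equivalently, the quotient metric space Γ₀ of loops modulo the relation d_Γ = 0 is a complete metric space. -/
noncomputable section

open Set Filter Metric MeasureTheory
open scoped Classical

/-- A loop: a continuous `1`-periodic map `ℝ → ℂ`, viewed as a continuous map from the
circle `S¹ = ℝ/ℤ` to the complex plane. -/
structure Loop where
  toFun : ℝ → ℂ
  continuous_toFun : Continuous toFun
  periodic_toFun : Function.Periodic toFun 1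

/-- Lifts of orientation-preserving homeomorphisms of the circle `ℝ/ℤ`: continuous strictly
increasing maps of `ℝ` commuting with translation by `1`. -/
def CircleMaps : Set (ℝ → ℝ) :=
  {φ | Continuous φ ∧ StrictMono φ ∧ ∀ t, φ (t + 1) = φ t + 1}

/-- The supremum distance between loops, up to orientation-preserving reparametrization:
`d_Γ(γ, γ') = inf_{φ,ψ} sup_t |γ(φ t) - γ'(ψ t)|`. -/
def dGamma (γ γ' : Loop) : ℝ :=
  sInf {r : ℝ | 0 ≤ r ∧ ∃ φ ∈ CircleMaps, ∃ ψ ∈ CircleMaps,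
    ∀ t : ℝ, dist (γ.toFun (φ t)) (γ'.toFun (ψ t)) ≤ r}

/-- Loops at `d_Γ`-distance zero are identified. -/
def loopRel (γ γ' : Loop) : Prop := dGamma γ γ' = 0

/-- The space `Γ₀` of loop classes: loops modulo the relation `d_Γ = 0`. -/
def LoopClass : Type := Quot loopRel

/-- The class of a loop in `Γ₀`. -/
def Loop.cls (γ : Loop) : LoopClass := Quot.mk loopRel γ

namespace LoopClass

/-- The image of a loop class (all representatives have the same image). -/
def image (c : LoopClass) : Set ℂ := ⋃ γ ∈ {γ : Loop | γ.cls = c}, Set.range γ.toFun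

/-- The diameter of a loop class. -/
def diam (c : LoopClass) : ℝ := Metric.diam c.image

/-- A loop class is trivial if its image is a single point. -/
def IsTrivial (c : LoopClass) : Prop := ∃ z : ℂ, c.image = {z}

/-- A loop class is simple if it has an injective representative. -/
def IsSimple (c : LoopClass) : Prop :=
  ∃ γ : Loop, γ.cls = c ∧ ∀ s t : ℝ, s ∈ Set.Ico (0:ℝ) 1 → t ∈ Set.Ico (0:ℝ) 1 →
    γ.toFun s = γ.toFun t → s = t

/-- The induced distance `d_Γ` on loop classes. -/
def dist (c c' : LoopClass) : ℝ :=
  sInf {r : ℝ | ∃ γ γ' : Loop, γ.cls = c ∧ γ'.cls = c' ∧ dGamma γ γ' ≤ r}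

end LoopClass

/-- The space `X(K)` of at most countable, locally finite collections of nontrivial loop
classes with images contained in `K`. -/
def LoopCollections (K : Set ℂ) : Set (Set LoopClass) :=
  {F | F.Countable ∧ (∀ c ∈ F, ¬ c.IsTrivial ∧ c.image ⊆ K) ∧
    ∀ ε : ℝ, 0 < ε → {c ∈ F | ε < c.diam}.Finite}

/-- A partial matching between the collections `F` and `G`: a set of pairs in which every
element of `F` and every element of `G` occurs at most once. -/
def IsMatching (F G : Set LoopClass) (π : Set (LoopClass × LoopClass)) : Prop :=
  (∀ p ∈ π, p.1 ∈ F ∧ p.2 ∈ G) ∧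
  (∀ p ∈ π, ∀ q ∈ π, p.1 = q.1 → p = q) ∧
  (∀ p ∈ π, ∀ q ∈ π, p.2 = q.2 → p = q)

/-- The elements of `F` and `G` not matched by `π`. -/
def unmatched (F G : Set LoopClass) (π : Set (LoopClass × LoopClass)) : Set LoopClass :=
  {c ∈ F | ∀ p ∈ π, p.1 ≠ c} ∪ {c ∈ G | ∀ p ∈ π, p.2 ≠ c}

/-- The distance `d_X` between loop collections: the infimum over partial matchings of the
maximum of the matched `d_Γ`-distances and of half the diameters of unmatched loops. -/
def dX (F G : Set LoopClass) : ℝ :=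
  sInf {r : ℝ | 0 ≤ r ∧ ∃ π : Set (LoopClass × LoopClass), IsMatching F G π ∧
    (∀ p ∈ π, LoopClass.dist p.1 p.2 ≤ r) ∧
    ∀ c ∈ unmatched F G π, c.diam / 2 ≤ r}

lemma circleMaps_id : (id : ℝ → ℝ) ∈ CircleMaps :=
  ⟨continuous_id, strictMono_id, fun _ => rfl⟩

lemma circleMaps_comp {φ ψ : ℝ → ℝ} (hφ : φ ∈ CircleMaps) (hψ : ψ ∈ CircleMaps) :
    φ ∘ ψ ∈ CircleMaps := by
  obtain ⟨hc, hm, hp⟩ := hφ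
  obtain ⟨hc', hm', hp'⟩ := hψ
  exact ⟨hc.comp hc', hm.comp hm', fun t => by simp [Function.comp, hp' t, hp (ψ t)]⟩

lemma circleMaps_add_nat {φ : ℝ → ℝ} (h : φ ∈ CircleMaps) (t : ℝ) (m : ℕ) :
    φ (t + m) = φ t + m := by
  induction m with
  | zero => simp
  | succ k ih =>
    have : t + (k + 1 : ℕ) = (t + k) + 1 := by push_cast; ring
    rw [this, h.2.2, ih]; push_cast; ring

lemma circleMaps_inv {φ : ℝ → ℝ} (h : φ ∈ CircleMaps) :
    ∃ ψ ∈ CircleMaps, (∀ t, φ (ψ t) = t) ∧ ∀ t, ψ (φ t) = t := by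
  obtain ⟨hc, hm, hp⟩ := h
  have hsurj : Function.Surjective φ := by
    apply hc.surjective
    · apply tendsto_atTop_atTop_of_monotone hm.monotone
      intro b
      refine ⟨(0:ℝ) + (⌈b - φ 0⌉₊ : ℕ), ?_⟩
      rw [circleMaps_add_nat ⟨hc, hm, hp⟩]
      have := Nat.le_ceil (b - φ 0)
      linarith
    · apply tendsto_atBot_atBot_of_monotone hm.monotone
      intro b
      refine ⟨(0:ℝ) - (⌈φ 0 - b⌉₊ : ℕ), ?_⟩
      have h1 : φ ((0:ℝ) - (⌈φ 0 - b⌉₊ : ℕ) + (⌈φ 0 - b⌉₊ : ℕ))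
          = φ ((0:ℝ) - (⌈φ 0 - b⌉₊ : ℕ)) + (⌈φ 0 - b⌉₊ : ℕ) :=
        circleMaps_add_nat ⟨hc, hm, hp⟩ _ _
      simp only [sub_add_cancel] at h1
      have := Nat.le_ceil (φ 0 - b)
      linarith
  let e := StrictMono.orderIsoOfSurjective φ hm hsurj
  have hco : ∀ t, φ (e.symm t) = t := fun t => by
    have := e.apply_symm_apply t
    rwa [show (e (e.symm t) : ℝ) = φ (e.symm t) from congrFun (StrictMono.coe_orderIsoOfSurjective φ hm hsurj) _] at this
  refine ⟨e.symm, ⟨e.symm.continuous, e.symm.strictMono, fun t => ?_⟩, hco, fun t => ?_⟩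
  · apply hm.injective
    rw [hco, hp, hco]
  · apply hm.injective
    rw [hco]

def dGammaSet (γ γ' : Loop) : Set ℝ :=
  {r : ℝ | 0 ≤ r ∧ ∃ φ ∈ CircleMaps, ∃ ψ ∈ CircleMaps,
    ∀ t : ℝ, dist (γ.toFun (φ t)) (γ'.toFun (ψ t)) ≤ r}

lemma dGamma_eq (γ γ' : Loop) : dGamma γ γ' = sInf (dGammaSet γ γ') := rfl

lemma dGammaSet_nonempty (γ γ' : Loop) : (dGammaSet γ γ').Nonempty := by
  set f : ℝ → ℝ := fun t => dist (γ.toFun t) (γ'.toFun t) with hf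
  have hfc : Continuous f := (γ.continuous_toFun.dist γ'.continuous_toFun)
  have hper : Function.Periodic f 1 := fun t => by
    simp [hf, γ.periodic_toFun t, γ'.periodic_toFun t]
  obtain ⟨x, hx, hmax⟩ := isCompact_Icc.exists_isMaxOn (α := ℝ) (s := Icc (0:ℝ) 1)
    ⟨0, by norm_num⟩ hfc.continuousOn
  refine ⟨f x, dist_nonneg, id, circleMaps_id, id, circleMaps_id, fun t => ?_⟩
  have h1 : f t = f (t - (⌊t⌋ : ℤ) * 1) := (hper.sub_int_mul_eq ⌊t⌋).symm
  have h2 : t - (⌊t⌋ : ℤ) * 1 ∈ Icc (0:ℝ) 1 := by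
    simp only [mul_one, mem_Icc]
    constructor <;> linarith [Int.floor_le t, Int.lt_floor_add_one t]
  calc dist (γ.toFun (id t)) (γ'.toFun (id t)) = f t := rfl
    _ = f (t - (⌊t⌋ : ℤ) * 1) := h1
    _ ≤ f x := hmax h2

lemma dGamma_nonneg (γ γ' : Loop) : 0 ≤ dGamma γ γ' :=
  le_csInf (dGammaSet_nonempty γ γ') fun _ hr => hr.1

lemma dGamma_le_of_mem {γ γ' : Loop} {r : ℝ} (hr : r ∈ dGammaSet γ γ') : dGamma γ γ' ≤ r :=
  csInf_le ⟨0, fun _ h => h.1⟩ hr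

lemma exists_mem_dGammaSet_lt {γ γ' : Loop} {r : ℝ} (h : dGamma γ γ' < r) :
    ∃ s ∈ dGammaSet γ γ', s < r :=
  exists_lt_of_csInf_lt (dGammaSet_nonempty γ γ') h

lemma dGamma_triangle (a b c : Loop) : dGamma a c ≤ dGamma a b + dGamma b c := by
  refine le_of_forall_pos_le_add fun ε hε => ?_
  obtain ⟨r, hr, hrlt⟩ := exists_mem_dGammaSet_lt (γ := a) (γ' := b)
    (lt_add_of_pos_right _ (half_pos hε))
  obtain ⟨r', hr', hrlt'⟩ := exists_mem_dGammaSet_lt (γ := b) (γ' := c)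
    (lt_add_of_pos_right _ (half_pos hε))
  obtain ⟨hr0, φ, hφ, ψ, hψ, hbd⟩ := hr
  obtain ⟨hr0', φ', hφ', ψ', hψ', hbd'⟩ := hr'
  obtain ⟨ψi, hψi, hco, -⟩ := circleMaps_inv hψ
  have hmem : r + r' ∈ dGammaSet a c := by
    refine ⟨by linarith, φ ∘ ψi ∘ φ', circleMaps_comp hφ (circleMaps_comp hψi hφ'),
      ψ', hψ', fun t => ?_⟩
    calc dist (a.toFun (φ (ψi (φ' t)))) (c.toFun (ψ' t))
        ≤ dist (a.toFun (φ (ψi (φ' t)))) (b.toFun (ψ (ψi (φ' t))))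
          + dist (b.toFun (ψ (ψi (φ' t)))) (c.toFun (ψ' t)) := dist_triangle _ _ _
      _ ≤ r + r' := by
          refine add_le_add (hbd _) ?_
          rw [hco]; exact hbd' t
  have := dGamma_le_of_mem hmem
  linarith


/-- Every `d_Γ`-Cauchy sequence of loops converges in `d_Γ` to some loop;
i.e. the quotient space `Γ₀` is complete. -/
theorem loops_complete (γ : ℕ → Loop)
    (hcauchy : ∀ ε : ℝ, 0 < ε → ∃ N : ℕ, ∀ m ≥ N, ∀ n ≥ N, dGamma (γ m) (γ n) < ε) :
    ∃ γlim : Loop, Tendsto (fun n => dGamma (γ n) γlim) atTop (nhds 0) := by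
  have hpow : ∀ k : ℕ, (0:ℝ) < (1/2)^k := fun k => by positivity
  choose Nf hNf using fun k : ℕ => hcauchy ((1/2)^k) (hpow k)
  set n : ℕ → ℕ := fun k => Nat.rec (motive := fun _ => ℕ) (Nf 0)
    (fun k nk => max (nk+1) (Nf (k+1))) k with hn
  have hnNf : ∀ k, Nf k ≤ n k := by
    intro k; cases k with
    | zero => exact le_refl _
    | succ k => exact le_max_right _ _
  have hnsucc : ∀ k, n k + 1 ≤ n (k+1) := fun k => le_max_left _ _
  have hnmono : StrictMono n := strictMono_nat_of_lt_succ fun k => hnsucc k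
  have hdlt : ∀ k, dGamma (γ (n k)) (γ (n (k+1))) < (1/2)^k := fun k =>
    hNf k _ (hnNf k) _ (le_trans (hnNf k) (le_trans (Nat.le_succ _) (hnsucc k)))
  have H : ∀ k, ∃ φ ∈ CircleMaps, ∃ ψ ∈ CircleMaps,
      ∀ t, dist ((γ (n k)).toFun (φ t)) ((γ (n (k+1))).toFun (ψ t)) ≤ (1/2)^k := by
    intro k
    obtain ⟨r, ⟨hr0, φ, hφ, ψ, hψ, hbd⟩, hrlt⟩ := exists_mem_dGammaSet_lt (hdlt k)
    exact ⟨φ, hφ, ψ, hψ, fun t => (hbd t).trans hrlt.le⟩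
  choose φ hφ ψ hψ hb using H
  choose φi hφi hco hco' using fun k => circleMaps_inv (hφ k)
  set α : ℕ → ℝ → ℝ := fun k => Nat.rec (motive := fun _ => ℝ → ℝ) id
    (fun k a => ψ k ∘ φi k ∘ a) k with hα
  have hαmem : ∀ k, α k ∈ CircleMaps := by
    intro k; induction k with
    | zero => exact circleMaps_id
    | succ k ih => exact circleMaps_comp (hψ k) (circleMaps_comp (hφi k) ih)
  set δ : ℕ → ℝ → ℂ := fun k t => (γ (n k)).toFun (α k t) with hδ
  have hstep : ∀ k t, dist (δ k t) (δ (k+1) t) ≤ 1 * (1/2)^k := by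
    intro k t
    rw [one_mul]
    have := hb k (φi k (α k t))
    rwa [hco k] at this
  have hcau : ∀ t, CauchySeq (fun k => δ k t) :=
    fun t => cauchySeq_of_le_geometric (1/2) 1 (by norm_num) (fun k => hstep k t)
  choose g hg using fun t => cauchySeq_tendsto_of_complete (hcau t)
  have hdistg : ∀ k t, dist (δ k t) (g t) ≤ 2 * (1/2)^k := by
    intro k t
    have := dist_le_of_le_geometric_of_tendsto (1/2) 1 (by norm_num)
      (fun k => hstep k t) (hg t) k
    calc dist (δ k t) (g t) ≤ 1 * (1/2)^k / (1 - 1/2) := this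
      _ = 2 * (1/2)^k := by ring
  have hδcont : ∀ k, Continuous (δ k) := fun k =>
    (γ (n k)).continuous_toFun.comp (hαmem k).1
  have hgcont : Continuous g := by
    have htu : TendstoUniformly δ g atTop := by
      rw [Metric.tendstoUniformly_iff]
      intro ε hε
      have h0 : Tendsto (fun k : ℕ => 2 * (1/2:ℝ)^k) atTop (nhds 0) := by
        simpa using (tendsto_pow_atTop_nhds_zero_of_lt_one
          (by norm_num : (0:ℝ) ≤ 1/2) (by norm_num)).const_mul 2
      filter_upwards [h0.eventually (gt_mem_nhds hε)] with k hk t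
      calc dist (g t) (δ k t) = dist (δ k t) (g t) := dist_comm _ _
        _ ≤ 2 * (1/2)^k := hdistg k t
        _ < ε := hk
    exact htu.continuous (Eventually.of_forall hδcont).frequently
  have hgper : Function.Periodic g 1 := by
    intro t
    have heq : (fun k => δ k (t+1)) = fun k => δ k t := by
      funext k
      show (γ (n k)).toFun (α k (t+1)) = (γ (n k)).toFun (α k t)
      rw [(hαmem k).2.2 t, (γ (n k)).periodic_toFun]
    exact tendsto_nhds_unique (heq ▸ hg (t+1)) (hg t)
  refine ⟨⟨g, hgcont, hgper⟩, ?_⟩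
  have hlim : ∀ k, dGamma (γ (n k)) ⟨g, hgcont, hgper⟩ ≤ 2 * (1/2)^k := fun k =>
    dGamma_le_of_mem ⟨by positivity, α k, hαmem k, id, circleMaps_id, fun t => hdistg k t⟩
  rw [Metric.tendsto_atTop]
  intro ε hε
  obtain ⟨N1, hN1⟩ := hcauchy (ε/2) (half_pos hε)
  obtain ⟨K, hK⟩ := exists_pow_lt_of_lt_one (by positivity : (0:ℝ) < ε/4)
    (by norm_num : (1/2:ℝ) < 1)
  set k := max K N1 with hk
  refine ⟨N1, fun m hm => ?_⟩
  have h1 : dGamma (γ m) (γ (n k)) < ε/2 :=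
    hN1 m hm _ (le_trans (le_max_right _ _) (hnmono.le_apply))
  have h2 : dGamma (γ (n k)) ⟨g, hgcont, hgper⟩ ≤ 2 * (1/2)^k := hlim k
  have h3 : (1/2:ℝ)^k ≤ (1/2)^K :=
    pow_le_pow_of_le_one (by norm_num) (by norm_num) (le_max_left _ _)
  have h4 : dGamma (γ m) ⟨g, hgcont, hgper⟩
      ≤ dGamma (γ m) (γ (n k)) + dGamma (γ (n k)) ⟨g, hgcont, hgper⟩ := dGamma_triangle _ _ _
  rw [Real.dist_eq, sub_zero, abs_of_nonneg (dGamma_nonneg _ _)]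
  linarith [hK]
end
end

section
/- Let 0 < α ≤ 1, let a < b be reals, let f : [a, b] → ℝ be α-Hölder continuous, and let S ⊆ [a, b] be a closed set whose α-dimensional Hausdorff measure is zero (in particular this holds if the Hausdorff dimension of S is strictly less than α). If f is constant on every connected component of [a, b] \ S, then f is constant on [a, b]. -/
noncomputable section

open Set Filter Metric MeasureTheory
open scoped Classical ENNReal NNReal

/-- An `α`-Hölder continuous function on `[a, b]` that is constant on
every connected component of the complement of a closed set `S` of zero `α`-dimensional
Hausdorff measure is constant on `[a, b]`. -/
theorem holder_constant_off_thin_set (α : ℝ) (hα0 : 0 < α) (hα1 : α ≤ 1)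
    (a b : ℝ) (hab : a < b) (f : ℝ → ℝ) (C : ℝ)
    (hf : ∀ x ∈ Set.Icc a b, ∀ y ∈ Set.Icc a b, |f x - f y| ≤ C * |x - y| ^ α)
    (S : Set ℝ) (hS : IsClosed S) (hSsub : S ⊆ Set.Icc a b)
    (hSnull : μH[α] S = 0)
    (hconst : ∀ x ∈ Set.Icc a b \ S, ∀ y ∈ Set.Icc a b \ S,
      y ∈ connectedComponentIn (Set.Icc a b \ S) x → f x = f y) :
    ∀ x ∈ Set.Icc a b, ∀ y ∈ Set.Icc a b, f x = f y := by
  -- `C` is nonnegative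
  have hC0 : 0 ≤ C := by
    by_contra h
    push_neg at h
    have h1 := hf a ⟨le_refl a, hab.le⟩ b ⟨hab.le, le_refl b⟩
    have hpos : 0 < |a - b| ^ α := by
      have : 0 < |a - b| := abs_pos.mpr (sub_ne_zero.mpr hab.ne)
      positivity
    nlinarith [abs_nonneg (f a - f b)]
  set r : ℝ≥0 := α.toNNReal with hrdef
  have hrα : (r : ℝ) = α := Real.coe_toNNReal α hα0.le
  have hrpos : 0 < r := Real.toNNReal_pos.mpr hα0
  -- f is Hölder on [a,b]
  have hhold : HolderOnWith C.toNNReal r f (Set.Icc a b) := by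
    intro x hx y hy
    rw [edist_dist, edist_dist, Real.dist_eq, Real.dist_eq]
    calc ENNReal.ofReal (|f x - f y|) ≤ ENNReal.ofReal (C * |x - y| ^ α) :=
          ENNReal.ofReal_le_ofReal (hf x hx y hy)
      _ = ENNReal.ofReal C * ENNReal.ofReal (|x - y| ^ α) := ENNReal.ofReal_mul hC0
      _ = (C.toNNReal : ℝ≥0∞) * ENNReal.ofReal (|x - y|) ^ (r : ℝ) := by
          rw [hrα, ENNReal.ofReal_rpow_of_nonneg (abs_nonneg _) hα0.le]
          rfl
  -- image of S is Lebesgue-null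
  have himgS : volume (f '' S) = 0 := by
    have h1 : μH[(1 : ℝ)] (f '' S) ≤ (C.toNNReal : ℝ≥0∞) ^ (1 : ℝ) * μH[(r : ℝ) * 1] S :=
      (hhold.mono hSsub).hausdorffMeasure_image_le hrpos zero_le_one
    rw [MeasureTheory.hausdorffMeasure_real] at h1
    rw [show (r : ℝ) * 1 = α by rw [mul_one, hrα]] at h1
    rw [hSnull, mul_zero] at h1
    exact le_antisymm h1 zero_le
  -- image of the open complement is countable
  have hcnt : (f '' (Set.Ioo a b \ S)).Countable := by
    set U := Set.Ioo a b \ S with hUdef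
    have hUopen : IsOpen U := isOpen_Ioo.sdiff hS
    have hsub : f '' U ⊆ f '' (U ∩ Set.range ((↑) : ℚ → ℝ)) := by
      rintro _ ⟨x, hx, rfl⟩
      have hcomp : IsOpen (connectedComponentIn U x) := hUopen.connectedComponentIn
      have hne : (connectedComponentIn U x).Nonempty := ⟨x, mem_connectedComponentIn hx⟩
      obtain ⟨q, hq⟩ := Rat.denseRange_cast.exists_mem_open hcomp hne
      have hqU : (q : ℝ) ∈ U := connectedComponentIn_subset U x hq
      refine ⟨q, ⟨hqU, q, rfl⟩, ?_⟩
      have hx' : x ∈ Set.Icc a b \ S := ⟨Set.Ioo_subset_Icc_self hx.1, hx.2⟩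
      have hq' : (q : ℝ) ∈ connectedComponentIn (Set.Icc a b \ S) x :=
        connectedComponentIn_mono x (Set.diff_subset_diff_left Set.Ioo_subset_Icc_self) hq
      have hq'' : (q : ℝ) ∈ Set.Icc a b \ S := connectedComponentIn_subset _ _ hq'
      exact (hconst x hx' q hq'' hq').symm
    exact (((Set.countable_range _).mono Set.inter_subset_right).image f).mono hsub
  -- image of [a,b] is Lebesgue-null
  have hIccnull : volume (f '' Set.Icc a b) = 0 := by
    have hsub : f '' Set.Icc a b ⊆ f '' S ∪ f '' (Set.Ioo a b \ S) ∪ {f a, f b} := by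
      rintro _ ⟨x, hx, rfl⟩
      by_cases hxS : x ∈ S
      · exact Or.inl (Or.inl ⟨x, hxS, rfl⟩)
      · rcases eq_or_lt_of_le hx.1 with h | h
        · exact Or.inr (Or.inl (by rw [← h]))
        · rcases eq_or_lt_of_le hx.2 with h' | h'
          · exact Or.inr (Or.inr (by rw [h']; rfl))
          · exact Or.inl (Or.inr ⟨x, ⟨⟨h, h'⟩, hxS⟩, rfl⟩)
    refine measure_mono_null hsub ?_
    refine measure_union_null (measure_union_null himgS (hcnt.measure_zero volume)) ?_
    exact ((Set.countable_singleton (f b)).insert (f a)).measure_zero volume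
  -- conclude
  intro x hx y hy
  by_contra hne
  have hcont : ContinuousOn f (Set.Icc a b) := hhold.continuousOn hrpos
  have hconn : IsPreconnected (f '' Set.Icc a b) := isPreconnected_Icc.image f hcont
  have hord : Set.OrdConnected (f '' Set.Icc a b) := hconn.ordConnected
  have hsub : Set.uIcc (f x) (f y) ⊆ f '' Set.Icc a b :=
    hord.uIcc_subset (Set.mem_image_of_mem f hx) (Set.mem_image_of_mem f hy)
  have h0 : volume (Set.uIcc (f x) (f y)) = 0 := measure_mono_null hsub hIccnull
  rw [Set.uIcc, Real.volume_Icc, ENNReal.ofReal_eq_zero] at h0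
  have h1 : f x ⊔ f y ≤ f x ⊓ f y := by linarith
  exact hne (le_antisymm (le_sup_left.trans (h1.trans inf_le_right))
    (le_sup_right.trans (h1.trans inf_le_left)))
end
end

section
/- Let T > 0, c > 0 and α ∈ (0, 1/2]. Let B : [0, T] → ℝ be α-Hölder with constant C, and let X : [0, T] → [0, ∞) be continuous, with s ↦ c/X_s Lebesgue integrable on [0, T] and X_t = B_t + ∫₀^t (c/X_s) ds for all t ∈ [0, T]. Then the function I : t ↦ ∫₀^t (c/X_s) ds is α-Hölder on [0, T], with a Hölder constant depending only on α, c, C and T; consequently X is also α-Hölder on [0, T]. -/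
noncomputable section

open Set Filter Metric MeasureTheory
open scoped Classical

private lemma holder_key (T c : ℝ) (hT : 0 < T) (hc : 0 < c)
    (α : ℝ) (hα0 : 0 < α) (hα : α ≤ 1 / 2) (C : ℝ) (hC : 0 ≤ C)
    (B X : ℝ → ℝ)
    (hB : ∀ s ∈ Set.Icc (0:ℝ) T, ∀ t ∈ Set.Icc (0:ℝ) T, |B s - B t| ≤ C * |s - t| ^ α)
    (hXc : ContinuousOn X (Set.Icc 0 T))
    (hX0 : ∀ t ∈ Set.Icc (0:ℝ) T, 0 ≤ X t)
    (hint : MeasureTheory.IntegrableOn (fun s => c / X s) (Set.Icc 0 T))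
    (hXeq : ∀ t ∈ Set.Icc (0:ℝ) T, X t = B t + ∫ s in (0:ℝ)..t, c / X s)
    {s t : ℝ} (hs : s ∈ Set.Icc (0:ℝ) T) (ht : t ∈ Set.Icc (0:ℝ) T) (hst : s ≤ t) :
    |(∫ u in (0:ℝ)..s, c / X u) - ∫ u in (0:ℝ)..t, c / X u|
      ≤ (3 * C + 3 * Real.sqrt c * T ^ ((1:ℝ)/2 - α)) * (t - s) ^ α := by
  set I : ℝ → ℝ := fun a => ∫ u in (0:ℝ)..a, c / X u with hIdef
  -- basic integrability facts
  have hII : ∀ a b : ℝ, a ∈ Set.Icc (0:ℝ) T → b ∈ Set.Icc (0:ℝ) T →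
      IntervalIntegrable (fun u => c / X u) volume a b := by
    intro a b ha hb
    rw [intervalIntegrable_iff]
    exact hint.mono_set ((Set.Ioc_subset_Icc_self).trans (Set.uIcc_subset_Icc ha hb))
  have h0T : (0:ℝ) ∈ Set.Icc (0:ℝ) T := ⟨le_refl _, hT.le⟩
  have hIdiff : ∀ a b : ℝ, a ∈ Set.Icc (0:ℝ) T → b ∈ Set.Icc (0:ℝ) T →
      I b - I a = ∫ u in a..b, c / X u := by
    intro a b ha hb
    exact intervalIntegral.integral_interval_sub_left (hII 0 b h0T hb) (hII 0 a h0T ha)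
  have hImono : ∀ a b : ℝ, a ∈ Set.Icc (0:ℝ) T → b ∈ Set.Icc (0:ℝ) T → a ≤ b →
      I a ≤ I b := by
    intro a b ha hb hab
    have h1 : 0 ≤ ∫ u in a..b, c / X u :=
      intervalIntegral.integral_nonneg hab
        (fun u hu => div_nonneg hc.le (hX0 u ⟨ha.1.trans hu.1, hu.2.trans hb.2⟩))
    have := hIdiff a b ha hb
    linarith
  have hIbound : ∀ a b r : ℝ, a ∈ Set.Icc (0:ℝ) T → b ∈ Set.Icc (0:ℝ) T → a ≤ b → 0 < r →
      (∀ u ∈ Set.Icc a b, r ≤ X u) → (∫ u in a..b, c / X u) ≤ (b - a) * (c / r) := by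
    intro a b r ha hb hab hr hX
    calc (∫ u in a..b, c / X u) ≤ ∫ _u in a..b, c / r :=
          intervalIntegral.integral_mono_on hab (hII a b ha hb) intervalIntegrable_const
            (fun u hu => div_le_div_of_nonneg_left hc.le hr (hX u hu))
      _ = (b - a) * (c / r) := by rw [intervalIntegral.integral_const, smul_eq_mul]
  -- continuity of I on [0, T]
  have hBc : ContinuousOn B (Set.Icc 0 T) := by
    rw [Metric.continuousOn_iff]
    intro b hb ε hε
    refine ⟨(ε / (C + 1)) ^ (1/α : ℝ), by positivity, fun a ha hab => ?_⟩
    have h1 : |a - b| < (ε / (C + 1)) ^ (1/α : ℝ) := by rwa [Real.dist_eq] at hab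
    have h2 : |a - b| ^ α < ((ε / (C + 1)) ^ (1/α : ℝ)) ^ α :=
      Real.rpow_lt_rpow (abs_nonneg _) h1 hα0
    have h3 : ((ε / (C + 1)) ^ (1/α : ℝ)) ^ α = ε / (C + 1) := by
      rw [← Real.rpow_mul (by positivity), one_div, inv_mul_cancel₀ hα0.ne', Real.rpow_one]
    have h4 : (C + 1) * (ε / (C + 1)) = ε := by field_simp
    have h5 : (0:ℝ) ≤ |a - b| ^ α := Real.rpow_nonneg (abs_nonneg _) α
    calc dist (B a) (B b) = |B a - B b| := Real.dist_eq _ _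
      _ ≤ C * |a - b| ^ α := hB a ha b hb
      _ ≤ (C + 1) * |a - b| ^ α := by nlinarith
      _ < (C + 1) * (ε / (C + 1)) := by
          have hC1 : (0:ℝ) < C + 1 := by linarith
          exact mul_lt_mul_of_pos_left (h3 ▸ h2) hC1
      _ = ε := h4
  have hIcont : ContinuousOn I (Set.Icc 0 T) := by
    have heq : Set.EqOn I (fun u => X u - B u) (Set.Icc 0 T) := by
      intro u hu
      have := hXeq u hu
      simp only [hIdef]
      linarith
    exact (hXc.sub hBc).congr heq
  -- reduce to the one-sided bound
  have hnn : 0 ≤ I t - I s := by linarith [hImono s t hs ht hst]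
  have habs : |I s - I t| = I t - I s := by
    rw [abs_sub_comm, abs_of_nonneg hnn]
  rw [habs]
  -- trivial case s = t
  rcases eq_or_lt_of_le hst with rfl | hlt
  · simp [Real.zero_rpow hα0.ne']
  -- main case s < t
  have hh : 0 < t - s := by linarith
  have hsub : Set.Icc s t ⊆ Set.Icc (0:ℝ) T := Set.Icc_subset_Icc hs.1 ht.2
  set H := C * (t - s) ^ α with hHdef
  have hH0 : 0 ≤ H := mul_nonneg hC (Real.rpow_nonneg hh.le α)
  have hBloc : ∀ u ∈ Set.Icc s t, ∀ v ∈ Set.Icc s t, |B u - B v| ≤ H := by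
    intro u hu v hv
    refine (hB u (hsub hu) v (hsub hv)).trans ?_
    have h1 : |u - v| ≤ t - s := by
      rw [abs_sub_le_iff]
      constructor <;> [linarith [hu.2, hv.1]; linarith [hv.2, hu.1]]
    exact mul_le_mul_of_nonneg_left (Real.rpow_le_rpow (abs_nonneg _) h1 hα0.le) hC
  set r := Real.sqrt (c * (t - s)) with hrdef
  have hr : 0 < r := Real.sqrt_pos.2 (mul_pos hc hh)
  have hrr : (t - s) * (c / r) = r := by
    have h2 : r * r = c * (t - s) := Real.mul_self_sqrt (mul_pos hc hh).le
    field_simp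
    nlinarith
  set K := Real.sqrt c * T ^ ((1:ℝ)/2 - α) * (t - s) ^ α with hKdef
  have hK0 : 0 ≤ K := by positivity
  have hrK : r ≤ K := by
    rw [hrdef, hKdef, Real.sqrt_mul hc.le, Real.sqrt_eq_rpow (t - s)]
    have hsplit : (t - s) ^ ((1:ℝ)/2) = (t - s) ^ ((1:ℝ)/2 - α) * (t - s) ^ α := by
      rw [← Real.rpow_add hh]; ring_nf
    rw [hsplit]
    have h1 : (t - s) ^ ((1:ℝ)/2 - α) ≤ T ^ ((1:ℝ)/2 - α) :=
      Real.rpow_le_rpow hh.le (by linarith [ht.2, hs.1]) (by linarith)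
    calc Real.sqrt c * ((t - s) ^ ((1:ℝ)/2 - α) * (t - s) ^ α)
        = (Real.sqrt c * (t - s) ^ ((1:ℝ)/2 - α)) * (t - s) ^ α := by ring
      _ ≤ (Real.sqrt c * T ^ ((1:ℝ)/2 - α)) * (t - s) ^ α :=
          mul_le_mul_of_nonneg_right
            (mul_le_mul_of_nonneg_left h1 (Real.sqrt_nonneg c))
            (Real.rpow_nonneg hh.le α)
      _ = Real.sqrt c * T ^ ((1:ℝ)/2 - α) * (t - s) ^ α := by ring
  have hRHS : (3 * C + 3 * Real.sqrt c * T ^ ((1:ℝ)/2 - α)) * (t - s) ^ α = 3 * H + 3 * K := by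
    rw [hHdef, hKdef]; ring
  rw [hRHS]
  -- minimum of X on [s, t]
  obtain ⟨u0, hu0, hmin⟩ :=
    isCompact_Icc.exists_isMinOn (Set.nonempty_Icc.2 hst) (hXc.mono hsub)
  have hu0T : u0 ∈ Set.Icc (0:ℝ) T := hsub hu0
  by_cases hcase : r ≤ X u0
  · -- X stays above r on [s, t]
    have hXge : ∀ u ∈ Set.Icc s t, r ≤ X u := fun u hu => hcase.trans (hmin hu)
    have h1 : I t - I s ≤ r := by
      have h2 := hIbound s t r hs ht hst hr hXge
      have h3 := hIdiff s t hs ht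
      linarith [hrr]
    linarith
  · push_neg at hcase
    -- contribution up to the minimum
    have hIus : I u0 - I s ≤ X u0 + H := by
      have e1 := hXeq u0 hu0T
      have e2 := hXeq s hs
      have hb : |B s - B u0| ≤ H := hBloc s ⟨le_refl s, hst⟩ u0 hu0
      have hb' : B s - B u0 ≤ H := (le_abs_self _).trans hb
      have hXs := hX0 s hs
      simp only [hIdef] at *
      linarith
    -- contribution after the minimum
    have hItu : I t - I u0 ≤ 2 * H + 2 * r := by
      by_cases hg : I t - I u0 ≤ 2 * H + r
      · linarith [hr.le]
      · push_neg at hg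
        have hu0t : u0 ≤ t := hu0.2
        have hIc : ContinuousOn I (Set.Icc u0 t) :=
          hIcont.mono (Set.Icc_subset_Icc hu0T.1 ht.2)
        have hmem : I u0 + (2 * H + r) ∈ Set.Icc (I u0) (I t) :=
          ⟨by linarith [hr.le], by linarith⟩
        obtain ⟨t1, ht1, hIt1⟩ := intermediate_value_Icc hu0t hIc hmem
        have ht1T : t1 ∈ Set.Icc (0:ℝ) T := ⟨hu0T.1.trans ht1.1, ht1.2.trans ht.2⟩
        have ht1st : t1 ∈ Set.Icc s t := ⟨hu0.1.trans ht1.1, ht1.2⟩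
        have hXge : ∀ u ∈ Set.Icc t1 t, r ≤ X u := by
          intro u hu
          have hust : u ∈ Set.Icc s t := ⟨ht1st.1.trans hu.1, hu.2⟩
          have huT : u ∈ Set.Icc (0:ℝ) T := hsub hust
          have e1 := hXeq u huT
          have e2 := hXeq u0 hu0T
          have hb : |B u - B u0| ≤ H := hBloc u hust u0 hu0
          have hb' : B u0 - B u ≤ H := by
            have := (abs_le.1 hb).1; linarith
          have hmono1 : I t1 ≤ I u := hImono t1 u ht1T huT hu.1
          have hX0u0 := hX0 u0 hu0T
          simp only [hIdef] at *
          linarith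
        have hfinal : I t - I t1 ≤ r := by
          have hb := hIbound t1 t r ht1T ht ht1.2 hr hXge
          have hd := hIdiff t1 t ht1T ht
          have h5 : (t - t1) * (c / r) ≤ (t - s) * (c / r) := by
            have : t - t1 ≤ t - s := by linarith [ht1st.1]
            exact mul_le_mul_of_nonneg_right this (by positivity)
          linarith [hrr]
        linarith
    linarith

/-- If `X_t = B_t + ∫₀^t c/X_s ds` with `B` `α`-Hölder with constant `C`
(`α ≤ 1/2`), `X ≥ 0` continuous and `s ↦ c/X_s` integrable, then `t ↦ ∫₀^t c/X_s ds` is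
`α`-Hölder on `[0, T]` with a constant depending only on `α, c, C, T`; consequently `X` is
also `α`-Hölder. -/
theorem integral_drift_is_holder (T c : ℝ) (hT : 0 < T) (hc : 0 < c)
    (α : ℝ) (hα0 : 0 < α) (hα : α ≤ 1 / 2) (C : ℝ) (hC : 0 ≤ C) :
    ∃ C' : ℝ, 0 ≤ C' ∧
      ∀ B X : ℝ → ℝ,
        (∀ s ∈ Set.Icc (0:ℝ) T, ∀ t ∈ Set.Icc (0:ℝ) T, |B s - B t| ≤ C * |s - t| ^ α) →
        ContinuousOn X (Set.Icc 0 T) →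
        (∀ t ∈ Set.Icc (0:ℝ) T, 0 ≤ X t) →
        MeasureTheory.IntegrableOn (fun s => c / X s) (Set.Icc 0 T) →
        (∀ t ∈ Set.Icc (0:ℝ) T, X t = B t + ∫ s in (0:ℝ)..t, c / X s) →
        (∀ s ∈ Set.Icc (0:ℝ) T, ∀ t ∈ Set.Icc (0:ℝ) T,
          |(∫ u in (0:ℝ)..s, c / X u) - ∫ u in (0:ℝ)..t, c / X u|
            ≤ C' * |s - t| ^ α) ∧
        (∀ s ∈ Set.Icc (0:ℝ) T, ∀ t ∈ Set.Icc (0:ℝ) T,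
          |X s - X t| ≤ (C + C') * |s - t| ^ α) := by
  refine ⟨3 * C + 3 * Real.sqrt c * T ^ ((1:ℝ)/2 - α), by positivity, ?_⟩
  intro B X hB hXc hX0 hint hXeq
  have hI : ∀ s ∈ Set.Icc (0:ℝ) T, ∀ t ∈ Set.Icc (0:ℝ) T,
      |(∫ u in (0:ℝ)..s, c / X u) - ∫ u in (0:ℝ)..t, c / X u|
        ≤ (3 * C + 3 * Real.sqrt c * T ^ ((1:ℝ)/2 - α)) * |s - t| ^ α := by
    intro s hs t ht
    rcases le_total s t with h | h
    · have := holder_key T c hT hc α hα0 hα C hC B X hB hXc hX0 hint hXeq hs ht h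
      rwa [abs_sub_comm s t, abs_of_nonneg (sub_nonneg.2 h)]
    · have := holder_key T c hT hc α hα0 hα C hC B X hB hXc hX0 hint hXeq ht hs h
      rw [abs_of_nonneg (sub_nonneg.2 h)]
      rwa [abs_sub_comm] at this
  refine ⟨hI, ?_⟩
  intro s hs t ht
  have e1 := hXeq s hs
  have e2 := hXeq t ht
  have h1 := hB s hs t ht
  have h2 := hI s hs t ht
  have e3 : X s - X t
      = (B s - B t) + ((∫ u in (0:ℝ)..s, c / X u) - ∫ u in (0:ℝ)..t, c / X u) := by
    rw [e1, e2]; ring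
  calc |X s - X t|
      = |(B s - B t) + ((∫ u in (0:ℝ)..s, c / X u) - ∫ u in (0:ℝ)..t, c / X u)| := by
        rw [e3]
    _ ≤ |B s - B t| + |(∫ u in (0:ℝ)..s, c / X u) - ∫ u in (0:ℝ)..t, c / X u| := abs_add_le _ _
    _ ≤ C * |s - t| ^ α + (3 * C + 3 * Real.sqrt c * T ^ ((1:ℝ)/2 - α)) * |s - t| ^ α := by
        linarith
    _ = (C + (3 * C + 3 * Real.sqrt c * T ^ ((1:ℝ)/2 - α))) * |s - t| ^ α := by ring
end
end

section
/- Let T > 0 and let X, Y : [0, T] → [0, ∞) be continuous functions whose zero sets {t : X_t = 0} and {t : Y_t = 0} have Lebesgue measure zero. Suppose there exists an order-preserving bijection Φ from the set of connected components of {t ∈ [0, T] : X_t > 0} to the set of connected components of {t ∈ [0, T] : Y_t > 0} (order-preserving: if a component lies entirely to the left of another, then its image lies entirely to the left of the other's image) such that every component I, with left endpoint a and length L, is mapped to a component Φ(I) with some left endpoint a′ and the same length L, satisfying Y(a′ + s) = X(a + s) for all s ∈ [0, L]. Then X = Y on [0, T]. -/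
noncomputable section

open Set Filter Metric MeasureTheory
open scoped Classical

/-- The excursion intervals of `X` away from `0` on `[0, T]`: the connected components of
`{t ∈ [0, T] : X t > 0}`. -/
def excursionComponents (T : ℝ) (X : ℝ → ℝ) : Set (Set ℝ) :=
  {I | ∃ t ∈ Set.Icc (0:ℝ) T, 0 < X t ∧
    I = connectedComponentIn {s ∈ Set.Icc (0:ℝ) T | 0 < X s} t}

namespace ExcursionAux

variable {T : ℝ} {X : ℝ → ℝ}

lemma comps_nonempty {I : Set ℝ} (hI : I ∈ excursionComponents T X) : I.Nonempty := by
  obtain ⟨t, ht, hpos, rfl⟩ := hI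
  exact ⟨t, mem_connectedComponentIn ⟨ht, hpos⟩⟩

lemma comps_subset {I : Set ℝ} (hI : I ∈ excursionComponents T X) :
    I ⊆ {s ∈ Set.Icc (0:ℝ) T | 0 < X s} := by
  obtain ⟨t, ht, hpos, rfl⟩ := hI
  exact connectedComponentIn_subset _ _

lemma comps_subset_Icc {I : Set ℝ} (hI : I ∈ excursionComponents T X) :
    I ⊆ Set.Icc (0:ℝ) T :=
  fun s hs => (comps_subset hI hs).1

lemma comps_preconnected {I : Set ℝ} (hI : I ∈ excursionComponents T X) :
    IsPreconnected I := by
  obtain ⟨t, ht, hpos, rfl⟩ := hI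
  exact isPreconnected_connectedComponentIn

lemma comps_eq_ccIn {I : Set ℝ} (hI : I ∈ excursionComponents T X) {u : ℝ} (hu : u ∈ I) :
    I = connectedComponentIn {s ∈ Set.Icc (0:ℝ) T | 0 < X s} u := by
  obtain ⟨t, ht, hpos, rfl⟩ := hI
  exact connectedComponentIn_eq hu

lemma comps_disjoint {I J : Set ℝ} (hI : I ∈ excursionComponents T X)
    (hJ : J ∈ excursionComponents T X) (hne : I ≠ J) : Disjoint I J := by
  rw [Set.disjoint_left]
  intro z hzI hzJ
  exact hne ((comps_eq_ccIn hI hzI).trans (comps_eq_ccIn hJ hzJ).symm)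

lemma comps_bddBelow {I : Set ℝ} (hI : I ∈ excursionComponents T X) : BddBelow I :=
  BddBelow.mono (comps_subset_Icc hI) bddBelow_Icc

lemma comps_bddAbove {I : Set ℝ} (hI : I ∈ excursionComponents T X) : BddAbove I :=
  BddAbove.mono (comps_subset_Icc hI) bddAbove_Icc

lemma comps_sInf_nonneg {I : Set ℝ} (hI : I ∈ excursionComponents T X) : 0 ≤ sInf I :=
  le_csInf (comps_nonempty hI) (fun x hx => (comps_subset_Icc hI hx).1)

lemma comps_sInf_le {I : Set ℝ} (hI : I ∈ excursionComponents T X) {u : ℝ} (hu : u ∈ I) :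
    sInf I ≤ u := csInf_le (comps_bddBelow hI) hu

lemma comps_le_sSup {I : Set ℝ} (hI : I ∈ excursionComponents T X) {u : ℝ} (hu : u ∈ I) :
    u ≤ sSup I := le_csSup (comps_bddAbove hI) hu

lemma comps_sInf_le_T {I : Set ℝ} (hI : I ∈ excursionComponents T X) : sInf I ≤ T := by
  obtain ⟨u, hu⟩ := comps_nonempty hI
  exact (comps_sInf_le hI hu).trans (comps_subset_Icc hI hu).2

lemma comps_subset_Icc_inf_sup {I : Set ℝ} (hI : I ∈ excursionComponents T X) :
    I ⊆ Set.Icc (sInf I) (sSup I) :=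
  fun x hx => ⟨comps_sInf_le hI hx, comps_le_sSup hI hx⟩

lemma comps_Ioo_subset {I : Set ℝ} (hI : I ∈ excursionComponents T X) :
    Set.Ioo (sInf I) (sSup I) ⊆ I := by
  intro z hz
  obtain ⟨x, hxI, hxz⟩ := exists_lt_of_csInf_lt (comps_nonempty hI) hz.1
  obtain ⟨y, hyI, hzy⟩ := exists_lt_of_lt_csSup (comps_nonempty hI) hz.2
  exact ((comps_preconnected hI).ordConnected).out hxI hyI ⟨le_of_lt hxz, le_of_lt hzy⟩

lemma comps_volume {I : Set ℝ} (hI : I ∈ excursionComponents T X) :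
    volume I = ENNReal.ofReal (sSup I - sInf I) := by
  have h1 : volume (Set.Ioo (sInf I) (sSup I)) ≤ volume I :=
    measure_mono (comps_Ioo_subset hI)
  have h2 : volume I ≤ volume (Set.Icc (sInf I) (sSup I)) :=
    measure_mono (comps_subset_Icc_inf_sup hI)
  rw [Real.volume_Ioo] at h1
  rw [Real.volume_Icc] at h2
  exact le_antisymm h2 h1

lemma comps_nullMeasurable {I : Set ℝ} (hI : I ∈ excursionComponents T X) :
    NullMeasurableSet I volume := by
  have hsub : I \ Set.Ioo (sInf I) (sSup I) ⊆ {sInf I, sSup I} := by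
    intro x hx
    rcases (comps_subset_Icc_inf_sup hI hx.1) with ⟨h1, h2⟩
    rcases h1.eq_or_lt with h | h
    · exact Or.inl h.symm
    rcases h2.eq_or_lt with h' | h'
    · exact Or.inr h'
    · exact absurd ⟨h, h'⟩ hx.2
  have h : Set.Ioo (sInf I) (sSup I) =ᵐ[volume] I := by
    rw [MeasureTheory.ae_eq_set]
    constructor
    · rw [Set.diff_eq_empty.mpr (comps_Ioo_subset hI)]
      exact measure_empty
    · exact measure_mono_null hsub
        (((Set.finite_singleton _).insert _).measure_zero _)
  exact measurableSet_Ioo.nullMeasurableSet.congr h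

lemma comps_trichotomy {I J : Set ℝ} (hI : I ∈ excursionComponents T X)
    (hJ : J ∈ excursionComponents T X) (hne : I ≠ J) :
    (∀ s ∈ I, ∀ t ∈ J, s < t) ∨ (∀ s ∈ J, ∀ t ∈ I, s < t) := by
  by_contra h
  push_neg at h
  obtain ⟨⟨s, hs, t, ht, hts⟩, ⟨u, hu, v, hv, hvu⟩⟩ := h
  have hdisj := comps_disjoint hI hJ hne
  rcases le_or_gt t v with hle | hlt
  · have hvJ : v ∈ J :=
      ((comps_preconnected hJ).ordConnected).out ht hu ⟨hle, hvu⟩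
    exact Set.disjoint_left.mp hdisj hv hvJ
  · have htI : t ∈ I :=
      ((comps_preconnected hI).ordConnected).out hv hs ⟨le_of_lt hlt, hts⟩
    exact Set.disjoint_left.mp hdisj htI ht

lemma comps_countable (hT : 0 < T) (hX : ContinuousOn X (Set.Icc 0 T)) :
    (excursionComponents T X).Countable := by
  have key : ∀ I ∈ excursionComponents T X, (∃ q : ℚ, (q:ℝ) ∈ I) ∨ I = {0} ∨ I = {T} := by
    intro I hI
    by_cases hmid : ∃ t ∈ I, 0 < t ∧ t < T
    · left
      obtain ⟨t, htI, ht0, htT⟩ := hmid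
      have hct : ContinuousAt X t := hX.continuousAt (Icc_mem_nhds ht0 htT)
      have hpos : 0 < X t := (comps_subset hI htI).2
      have hmem : (X ⁻¹' Set.Ioi 0) ∩ Set.Ioo 0 T ∈ nhds t :=
        Filter.inter_mem (hct (Ioi_mem_nhds hpos)) (Ioo_mem_nhds ht0 htT)
      obtain ⟨l, u, htlu, hsub⟩ := mem_nhds_iff_exists_Ioo_subset.mp hmem
      have hIoosub : Set.Ioo l u ⊆ {s ∈ Set.Icc (0:ℝ) T | 0 < X s} := by
        intro z hz
        obtain ⟨hz1, hz2⟩ := hsub hz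
        exact ⟨⟨le_of_lt hz2.1, le_of_lt hz2.2⟩, hz1⟩
      have hIoo_sub_I : Set.Ioo l u ⊆ I := by
        rw [comps_eq_ccIn hI htI]
        exact isPreconnected_Ioo.subset_connectedComponentIn htlu hIoosub
      obtain ⟨q, hq1, hq2⟩ := exists_rat_btwn (htlu.1.trans htlu.2)
      exact ⟨q, hIoo_sub_I ⟨hq1, hq2⟩⟩
    · right
      push_neg at hmid
      have hsub : I ⊆ ({0, T} : Set ℝ) := by
        intro x hx
        obtain ⟨hx1, hx2⟩ := comps_subset_Icc hI hx
        rcases hx1.eq_or_lt with h | h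
        · exact Or.inl h.symm
        rcases hx2.eq_or_lt with h' | h'
        · exact Or.inr h'
        · exact absurd h' (not_lt.mpr (hmid x hx h))
      have hnotboth : ¬ ((0:ℝ) ∈ I ∧ T ∈ I) := by
        rintro ⟨h0, hTT⟩
        have : T / 2 ∈ I :=
          ((comps_preconnected hI).ordConnected).out h0 hTT
            ⟨by linarith, by linarith⟩
        rcases hsub this with h | h
        · simp at h; linarith
        · simp at h; linarith
      obtain ⟨t0, ht0⟩ := comps_nonempty hI
      rcases hsub ht0 with h0 | hTmem
      · left
        subst h0
        apply Set.eq_singleton_iff_unique_mem.mpr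
        refine ⟨ht0, fun x hx => ?_⟩
        rcases hsub hx with h | h
        · exact h
        · exact absurd ⟨ht0, h ▸ hx⟩ hnotboth
      · right
        simp only [Set.mem_singleton_iff] at hTmem
        subst hTmem
        apply Set.eq_singleton_iff_unique_mem.mpr
        refine ⟨ht0, fun x hx => ?_⟩
        rcases hsub hx with h | h
        · exact absurd ⟨h ▸ hx, ht0⟩ hnotboth
        · exact h
  set f : Set ℝ → ℚ := fun I => if h : ∃ q : ℚ, (q:ℝ) ∈ I then h.choose else 0 with hf
  set A : Set (Set ℝ) := {I ∈ excursionComponents T X | ∃ q : ℚ, (q:ℝ) ∈ I} with hA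
  have hAcount : A.Countable := by
    apply Set.countable_of_injective_of_countable_image
      (f := f) ?_ (Set.to_countable _)
    intro I hI J hJ hIJ
    by_contra hne
    have hqI : (f I : ℝ) ∈ I := by
      simp only [hf, dif_pos hI.2]
      exact hI.2.choose_spec
    have hqJ : (f J : ℝ) ∈ J := by
      simp only [hf, dif_pos hJ.2]
      exact hJ.2.choose_spec
    rw [hIJ] at hqI
    exact Set.disjoint_left.mp (comps_disjoint hI.1 hJ.1 hne) hqI hqJ
  have hsub : excursionComponents T X ⊆ A ∪ ({{0}, {T}} : Set (Set ℝ)) := by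
    intro I hI
    rcases key I hI with h | h | h
    · exact Or.inl ⟨hI, h⟩
    · exact Or.inr (Or.inl h)
    · exact Or.inr (Or.inr h)
  exact Set.Countable.mono hsub
    (hAcount.union (((Set.finite_singleton _).insert _).countable))

/-- The total length of the excursion components strictly to the left of a component `I`
is the left endpoint of `I`. -/
lemma volume_left_union (hT : 0 < T) (hXpos : ∀ t ∈ Set.Icc (0:ℝ) T, 0 ≤ X t)
    (hXzero : volume {t ∈ Set.Icc (0:ℝ) T | X t = 0} = 0)
    {I : Set ℝ} (hI : I ∈ excursionComponents T X) :
    volume (⋃₀ {J ∈ excursionComponents T X | ∀ s ∈ J, ∀ t ∈ I, s < t}) =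
      ENNReal.ofReal (sInf I) := by
  set P : Set ℝ := {s ∈ Set.Icc (0:ℝ) T | 0 < X s} with hP
  set a : ℝ := sInf I with ha
  have h0a : 0 ≤ a := comps_sInf_nonneg hI
  have haT : a ≤ T := comps_sInf_le_T hI
  -- Step A : volume (P ∩ Icc 0 a) = ofReal a
  have hstepA : volume (P ∩ Set.Icc 0 a) = ENNReal.ofReal a := by
    apply le_antisymm
    · calc volume (P ∩ Set.Icc 0 a) ≤ volume (Set.Icc 0 a) :=
            measure_mono Set.inter_subset_right
        _ = ENNReal.ofReal a := by rw [Real.volume_Icc, sub_zero]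
    · have hcover : Set.Icc 0 a ⊆ (P ∩ Set.Icc 0 a) ∪ {t ∈ Set.Icc (0:ℝ) T | X t = 0} := by
        intro s hs
        have hsT : s ∈ Set.Icc (0:ℝ) T := ⟨hs.1, hs.2.trans haT⟩
        by_cases hpos : 0 < X s
        · exact Or.inl ⟨⟨hsT, hpos⟩, hs⟩
        · exact Or.inr ⟨hsT, le_antisymm (not_lt.mp hpos) (hXpos s hsT)⟩
      calc ENNReal.ofReal a = volume (Set.Icc (0:ℝ) a) := by
            rw [Real.volume_Icc, sub_zero]
        _ ≤ volume ((P ∩ Set.Icc 0 a) ∪ {t ∈ Set.Icc (0:ℝ) T | X t = 0}) :=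
            measure_mono hcover
        _ ≤ volume (P ∩ Set.Icc 0 a) + volume {t ∈ Set.Icc (0:ℝ) T | X t = 0} :=
            measure_union_le _ _
        _ = volume (P ∩ Set.Icc 0 a) := by rw [hXzero, add_zero]
  set L : Set (Set ℝ) := {J ∈ excursionComponents T X | ∀ s ∈ J, ∀ t ∈ I, s < t} with hL
  have hsub1 : ⋃₀ L ⊆ P ∩ Set.Icc 0 a := by
    rintro x ⟨J, ⟨hJ, hJlt⟩, hxJ⟩
    refine ⟨comps_subset hJ hxJ, (comps_subset_Icc hJ hxJ).1, ?_⟩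
    exact le_csInf (comps_nonempty hI) (fun i hi => le_of_lt (hJlt x hxJ i hi))
  have hsub2 : P ∩ Set.Icc 0 a ⊆ ⋃₀ L ∪ {a} := by
    rintro s ⟨hsP, hs0, hsa⟩
    rcases hsa.eq_or_lt with heq | hlt
    · exact Or.inr heq
    · left
      set K : Set ℝ := connectedComponentIn P s with hK
      have hKc : K ∈ excursionComponents T X := ⟨s, hsP.1, hsP.2, rfl⟩
      have hsK : s ∈ K := mem_connectedComponentIn hsP
      have hKne : K ≠ I := by
        intro h
        have : s ∈ I := h ▸ hsK
        have := comps_sInf_le hI this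
        linarith
      rcases comps_trichotomy hKc hI hKne with hlt' | hlt'
      · exact ⟨K, ⟨hKc, hlt'⟩, hsK⟩
      · obtain ⟨i, hi⟩ := comps_nonempty hI
        have h1 : i < s := hlt' i hi s hsK
        have h2 : a ≤ i := comps_sInf_le hI hi
        linarith
  apply le_antisymm
  · calc volume (⋃₀ L) ≤ volume (P ∩ Set.Icc 0 a) := measure_mono hsub1
      _ = ENNReal.ofReal a := hstepA
  · calc ENNReal.ofReal a = volume (P ∩ Set.Icc 0 a) := hstepA.symm
      _ ≤ volume (⋃₀ L ∪ {a}) := measure_mono hsub2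
      _ ≤ volume (⋃₀ L) + volume ({a} : Set ℝ) := measure_union_le _ _
      _ = volume (⋃₀ L) := by rw [Real.volume_singleton, add_zero]

end ExcursionAux

open ExcursionAux

/-- A nonnegative continuous function on `[0, T]` whose zero set has
Lebesgue measure zero is determined by the ordered collection of its excursions away
from `0`. -/
theorem excursions_determine_function (T : ℝ) (hT : 0 < T) (X Y : ℝ → ℝ)
    (hX : ContinuousOn X (Set.Icc 0 T)) (hY : ContinuousOn Y (Set.Icc 0 T))
    (hXpos : ∀ t ∈ Set.Icc (0:ℝ) T, 0 ≤ X t) (hYpos : ∀ t ∈ Set.Icc (0:ℝ) T, 0 ≤ Y t)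
    (hXzero : MeasureTheory.volume {t ∈ Set.Icc (0:ℝ) T | X t = 0} = 0)
    (hYzero : MeasureTheory.volume {t ∈ Set.Icc (0:ℝ) T | Y t = 0} = 0)
    (Φ : Set ℝ → Set ℝ)
    (hbij : Set.BijOn Φ (excursionComponents T X) (excursionComponents T Y))
    (horder : ∀ I ∈ excursionComponents T X, ∀ J ∈ excursionComponents T X,
      (∀ s ∈ I, ∀ t ∈ J, s < t) → ∀ s ∈ Φ I, ∀ t ∈ Φ J, s < t)
    (hmatch : ∀ I ∈ excursionComponents T X,
      sSup (Φ I) - sInf (Φ I) = sSup I - sInf I ∧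
      ∀ s ∈ Set.Icc (0:ℝ) (sSup I - sInf I), Y (sInf (Φ I) + s) = X (sInf I + s)) :
    ∀ t ∈ Set.Icc (0:ℝ) T, X t = Y t := by
  -- Key step: left endpoints agree
  have key : ∀ I ∈ excursionComponents T X, sInf (Φ I) = sInf I := by
    intro I hI
    have hΦI : Φ I ∈ excursionComponents T Y := hbij.mapsTo hI
    set LX : Set (Set ℝ) :=
      {J ∈ excursionComponents T X | ∀ s ∈ J, ∀ t ∈ I, s < t} with hLX
    set LY : Set (Set ℝ) :=
      {K ∈ excursionComponents T Y | ∀ s ∈ K, ∀ t ∈ Φ I, s < t} with hLY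
    have hXA : volume (⋃₀ LX) = ENNReal.ofReal (sInf I) :=
      volume_left_union hT hXpos hXzero hI
    have hYA : volume (⋃₀ LY) = ENNReal.ofReal (sInf (Φ I)) :=
      volume_left_union hT hYpos hYzero hΦI
    -- Φ is a bijection from LX to LY
    have hmaps : Set.MapsTo Φ LX LY := by
      rintro J ⟨hJ, hJlt⟩
      exact ⟨hbij.mapsTo hJ, horder J hJ I hI hJlt⟩
    have hsurj : Set.SurjOn Φ LX LY := by
      rintro K ⟨hK, hKlt⟩
      obtain ⟨J, hJ, rfl⟩ := hbij.surjOn hK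
      refine ⟨J, ⟨hJ, ?_⟩, rfl⟩
      have hJne : J ≠ I := by
        rintro rfl
        obtain ⟨k, hk⟩ := comps_nonempty hK
        exact lt_irrefl k (hKlt k hk k hk)
      rcases comps_trichotomy hJ hI hJne with h | h
      · exact h
      · exfalso
        have h' := horder I hI J hJ h
        obtain ⟨k, hk⟩ := comps_nonempty hK
        obtain ⟨p, hp⟩ := comps_nonempty hΦI
        exact lt_irrefl _ ((hKlt k hk p hp).trans (h' p hp k hk))
    have hbij' : Set.BijOn Φ LX LY :=
      ⟨hmaps, hbij.injOn.mono (Set.sep_subset _ _), hsurj⟩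
    have hLXcount : LX.Countable :=
      (comps_countable hT hX).mono (Set.sep_subset _ _)
    have hLYcount : LY.Countable :=
      (comps_countable hT hY).mono (Set.sep_subset _ _)
    have hXsum : volume (⋃₀ LX) = ∑' (J : LX), volume (J : Set ℝ) :=
      measure_sUnion₀ hLXcount
        (fun J hJ K hK hne => (comps_disjoint hJ.1 hK.1 hne).aedisjoint)
        (fun J hJ => comps_nullMeasurable hJ.1)
    have hYsum : volume (⋃₀ LY) = ∑' (K : LY), volume (K : Set ℝ) :=
      measure_sUnion₀ hLYcount
        (fun J hJ K hK hne => (comps_disjoint hJ.1 hK.1 hne).aedisjoint)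
        (fun J hJ => comps_nullMeasurable hJ.1)
    have hvol_eq : ∀ J ∈ LX, volume (Φ J) = volume J := by
      intro J hJ
      rw [comps_volume (hmaps hJ).1, comps_volume hJ.1, (hmatch J hJ.1).1]
    have htsum : ∑' (K : LY), volume (K : Set ℝ) = ∑' (J : LX), volume (J : Set ℝ) := by
      rw [← Equiv.tsum_eq (hbij'.equiv Φ) (fun K : LY => volume (K : Set ℝ))]
      apply tsum_congr
      intro J
      have hcoe : ((hbij'.equiv Φ J : LY) : Set ℝ) = Φ (J : Set ℝ) := rfl
      rw [hcoe, hvol_eq J J.2]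
    have hfinal : ENNReal.ofReal (sInf (Φ I)) = ENNReal.ofReal (sInf I) := by
      rw [← hYA, hYsum, htsum, ← hXsum, hXA]
    rw [ENNReal.ofReal_eq_ofReal_iff (comps_sInf_nonneg hΦI) (comps_sInf_nonneg hI)] at hfinal
    exact hfinal
  -- Conclusion
  intro t ht
  by_cases hXt : 0 < X t
  · set I : Set ℝ := connectedComponentIn {s ∈ Set.Icc (0:ℝ) T | 0 < X s} t with hIdef
    have hIc : I ∈ excursionComponents T X := ⟨t, ht, hXt, rfl⟩
    have htI : t ∈ I := mem_connectedComponentIn ⟨ht, hXt⟩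
    have hs1 : 0 ≤ t - sInf I := sub_nonneg.mpr (comps_sInf_le hIc htI)
    have hs2 : t - sInf I ≤ sSup I - sInf I := by
      have := comps_le_sSup hIc htI; linarith
    have := (hmatch I hIc).2 (t - sInf I) ⟨hs1, hs2⟩
    rw [key I hIc, add_sub_cancel] at this
    exact this.symm
  · have hXt0 : X t = 0 := le_antisymm (not_lt.mp hXt) (hXpos t ht)
    by_cases hYt : 0 < Y t
    · exfalso
      set K : Set ℝ := connectedComponentIn {s ∈ Set.Icc (0:ℝ) T | 0 < Y s} t with hKdef
      have hKc : K ∈ excursionComponents T Y := ⟨t, ht, hYt, rfl⟩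
      have htK : t ∈ K := mem_connectedComponentIn ⟨ht, hYt⟩
      obtain ⟨I, hIc, hKI⟩ := hbij.surjOn hKc
      have hinf : sInf K = sInf I := by rw [← hKI, key I hIc]
      have hlen : sSup K - sInf K = sSup I - sInf I := by
        rw [← hKI]; exact (hmatch I hIc).1
      have hs1 : 0 ≤ t - sInf I := by
        have := comps_sInf_le hKc htK; rw [hinf] at this; linarith
      have hs2 : t - sInf I ≤ sSup I - sInf I := by
        have h1 := comps_le_sSup hKc htK
        have h2 : sSup K = sSup I - sInf I + sInf K := by linarith
        rw [hinf] at h2; linarith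
      have := (hmatch I hIc).2 (t - sInf I) ⟨hs1, hs2⟩
      rw [key I hIc, add_sub_cancel] at this
      rw [this, hXt0] at hYt
      exact lt_irrefl 0 hYt
    · have hYt0 : Y t = 0 := le_antisymm (not_lt.mp hYt) (hYpos t ht)
      rw [hXt0, hYt0]
end
end
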